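/- Let p ∈ F_{n,2r} be a psd form with p(1,0,…,0) > 0, and define the polynomial q on ℝ^{n−1} by q(x₂,…,xₙ) = p(1,x₂,…,xₙ). Then p is a convex function on ℝⁿ if and only if the function (x₂,…,xₙ) ↦ q(x₂,…,xₙ)^{1/(2r)} is convex on ℝ^{n−1}. -/

import Mathlib

open MvPolynomial Filter

/-- Composition of a form with a matrix: `(p ∘ M)(x) = p (M x)`. -/
noncomputable def compMat {n : ℕ} (p : MvPolynomial (Fin n) ℝ)
    (M : Matrix (Fin n) (Fin n) ℝ) : MvPolynomial (Fin n) ℝ :=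
  aeval (fun j => ∑ k, MvPolynomial.C (M j k) * X k) p

/-- Coefficientwise convergence of a sequence of polynomials. -/
def CoeffTendsto {n : ℕ} (f : ℕ → MvPolynomial (Fin n) ℝ)
    (q : MvPolynomial (Fin n) ℝ) : Prop :=
  ∀ i : Fin n →₀ ℕ, Tendsto (fun m => (f m).coeff i) atTop (nhds (q.coeff i))

/-- A blender: a closed convex cone of degree-`d` forms closed under linear changes of variables. -/
def IsBlender (n d : ℕ) (B : Set (MvPolynomial (Fin n) ℝ)) : Prop :=
  (∀ p ∈ B, p.IsHomogeneous d) ∧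
  (0 ∈ B) ∧
  (∀ p ∈ B, ∀ q ∈ B, p + q ∈ B) ∧
  (∀ (f : ℕ → MvPolynomial (Fin n) ℝ) (q : MvPolynomial (Fin n) ℝ),
      (∀ m, f m ∈ B) → CoeffTendsto f q → q ∈ B) ∧
  (∀ p ∈ B, ∀ M : Matrix (Fin n) (Fin n) ℝ, compMat p M ∈ B)

/-- The inner product `[p,q] = Σ_i c(i) a(p;i) a(q;i)`, where the coefficient of `x^i`
is `c(i) a(p;i)` and `c(i)` is the multinomial coefficient. -/
noncomputable def formInner {n : ℕ} (p q : MvPolynomial (Fin n) ℝ) : ℝ :=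
  ∑ i ∈ p.support ∪ q.support,
    p.coeff i * q.coeff i / (Nat.multinomial Finset.univ (fun j => i j) : ℝ)

/-- The cone of psd forms of degree `d`. -/
def Psd (n d : ℕ) : Set (MvPolynomial (Fin n) ℝ) :=
  {p | p.IsHomogeneous d ∧ ∀ u : Fin n → ℝ, 0 ≤ eval u p}

/-- The linear form with coefficients `a`. -/
noncomputable def linForm {n : ℕ} (a : Fin n → ℝ) : MvPolynomial (Fin n) ℝ :=
  ∑ j, MvPolynomial.C (a j) * X j

/-- The cone `Q_{n,d}` of sums of `d`-th powers of real linear forms. -/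
def SumPow (n d : ℕ) : Set (MvPolynomial (Fin n) ℝ) :=
  {p | ∃ (s : ℕ) (a : Fin s → Fin n → ℝ), p = ∑ k, (linForm (a k)) ^ d}


section AuxProofLemmas
open Set


lemma mv_differentiable {n : ℕ} (p : MvPolynomial (Fin n) ℝ) :
    Differentiable ℝ (fun x : Fin n → ℝ => eval x p) := by
  apply p.induction_on
  · intro a; simp only [eval_C]; exact differentiable_const a
  · intro p q hp hq; simp only [map_add]; exact hp.add hq
  · intro p i hp
    simp only [map_mul, eval_X]
    exact hp.mul ((ContinuousLinearMap.proj i : (Fin n → ℝ) →L[ℝ] ℝ)).differentiable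

lemma eval_smul_homog {n d : ℕ} {p : MvPolynomial (Fin n) ℝ} (hp : p.IsHomogeneous d)
    (c : ℝ) (x : Fin n → ℝ) : eval (c • x) p = c ^ d * eval x p := by
  rw [eval_eq, eval_eq, Finset.mul_sum]
  apply Finset.sum_congr rfl
  intro dd hdd
  have hdeg : ∑ i ∈ dd.support, dd i = d := by
    have h := hp (MvPolynomial.mem_support_iff.mp hdd)
    rw [Finsupp.weight_apply, Finsupp.sum] at h
    simpa using h
  have : ∀ i : Fin n, (c • x) i ^ dd i = c ^ dd i * x i ^ dd i := by
    intro i; rw [Pi.smul_apply, smul_eq_mul, mul_pow]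
  simp_rw [this]
  rw [Finset.prod_mul_distrib, Finset.prod_pow_eq_pow_sum, hdeg]
  ring

lemma convexOn_line {n : ℕ} {s : Set (Fin n → ℝ)} {f : (Fin n → ℝ) → ℝ}
    (hf : ConvexOn ℝ s f) (u v : Fin n → ℝ) {S : Set ℝ} (hS : Convex ℝ S)
    (hmem : ∀ t ∈ S, u + t • (v - u) ∈ s) :
    ConvexOn ℝ S (fun t => f (u + t • (v - u))) := by
  refine ⟨hS, ?_⟩
  intro x hx y hy a b ha hb hab
  have key : u + (a * x + b * y) • (v - u)
      = a • (u + x • (v - u)) + b • (u + y • (v - u)) := by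
    have h1 : a • (u + x • (v - u)) + b • (u + y • (v - u))
        = (a + b) • u + (a * x + b * y) • (v - u) := by module
    rw [h1, hab, one_smul]
  simp only [smul_eq_mul]
  rw [key]
  exact hf.2 (hmem x hx) (hmem y hy) ha hb hab

lemma glue1d {f : ℝ → ℝ} (hf : Differentiable ℝ f) (c : ℝ)
    (h1 : ConvexOn ℝ (Iic c) f) (h2 : ConvexOn ℝ (Ici c) f) :
    ConvexOn ℝ univ f := by
  have m1 : MonotoneOn (deriv f) (Iic c) :=
    h1.monotoneOn_deriv (fun x _ => hf.differentiableAt)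
  have m2 : MonotoneOn (deriv f) (Ici c) :=
    h2.monotoneOn_deriv (fun x _ => hf.differentiableAt)
  have hm : Monotone (deriv f) := by
    intro a b hab
    rcases le_total b c with hbc | hcb
    · exact m1 (mem_Iic.mpr (hab.trans hbc)) (mem_Iic.mpr hbc) hab
    · rcases le_total a c with hac | hca
      · exact (m1 (mem_Iic.mpr hac) (mem_Iic.mpr le_rfl) hac).trans
          (m2 (mem_Ici.mpr le_rfl) (mem_Ici.mpr hcb) hcb)
      · exact m2 (mem_Ici.mpr hca) (mem_Ici.mpr (hca.trans hab)) hab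
  exact Monotone.convexOn_univ_of_deriv hf hm

lemma glue_halves {n : ℕ} {f : (Fin (n + 1) → ℝ) → ℝ} (hf : Differentiable ℝ f)
    (h1 : ConvexOn ℝ {x : Fin (n + 1) → ℝ | 0 ≤ x 0} f)
    (h2 : ConvexOn ℝ {x : Fin (n + 1) → ℝ | x 0 ≤ 0} f) :
    ConvexOn ℝ univ f := by
  refine ⟨convex_univ, ?_⟩
  intro u _ v _ a b ha hb hab
  have hφd : Differentiable ℝ (fun t : ℝ => f (u + t • (v - u))) := by
    apply hf.comp
    exact (differentiable_const u).add (differentiable_id.smul_const (v - u))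
  have hline : ∀ t : ℝ, (u + t • (v - u)) 0 = u 0 + t * (v 0 - u 0) := by
    intro t; simp
  have hφ : ConvexOn ℝ univ (fun t : ℝ => f (u + t • (v - u))) := by
    by_cases hcd : v 0 = u 0
    · rcases le_total 0 (u 0) with h | h
      · exact convexOn_line h1 u v convex_univ
          (fun t _ => by simp only [Set.mem_setOf_eq, hline, hcd]; simpa using h)
      · exact convexOn_line h2 u v convex_univ
          (fun t _ => by simp only [Set.mem_setOf_eq, hline, hcd]; simpa using h)
    · set t₀ : ℝ := u 0 / (u 0 - v 0) with ht₀
      have hne : u 0 - v 0 ≠ 0 := sub_ne_zero.mpr fun h => hcd h.symm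
      have hval : ∀ t : ℝ, (u + t • (v - u)) 0 = (u 0 - v 0) * (t₀ - t) := by
        intro t; rw [hline, ht₀]; field_simp; ring
      rcases lt_or_gt_of_ne hne with hneg | hpos
      · apply glue1d hφd t₀
        · exact convexOn_line h2 u v (convex_Iic t₀) (fun t ht => by
            simp only [Set.mem_setOf_eq, hval]
            have := mem_Iic.mp ht; nlinarith)
        · exact convexOn_line h1 u v (convex_Ici t₀) (fun t ht => by
            simp only [Set.mem_setOf_eq, hval]
            have := mem_Ici.mp ht; nlinarith)
      · apply glue1d hφd t₀
        · exact convexOn_line h1 u v (convex_Iic t₀) (fun t ht => by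
            simp only [Set.mem_setOf_eq, hval]
            have := mem_Iic.mp ht; nlinarith)
        · exact convexOn_line h2 u v (convex_Ici t₀) (fun t ht => by
            simp only [Set.mem_setOf_eq, hval]
            have := mem_Ici.mp ht; nlinarith)
  have h0 : u + (0:ℝ) • (v - u) = u := by simp
  have h1' : u + (1:ℝ) • (v - u) = v := by simp
  have hcomb : a • u + b • v = u + b • (v - u) := by
    have : a • u + b • v = (a + b) • u + b • (v - u) := by module
    rw [this, hab, one_smul]
  have := hφ.2 (mem_univ (0:ℝ)) (mem_univ (1:ℝ)) ha hb hab
  simp only [smul_eq_mul, mul_zero, mul_one, zero_add, h0, h1'] at this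
  rw [hcomb]
  simpa using this

lemma convexOn_closed_half {n : ℕ} {f : (Fin (n + 1) → ℝ) → ℝ} (hf : Continuous f)
    (h : ConvexOn ℝ {x : Fin (n + 1) → ℝ | 0 < x 0} f) :
    ConvexOn ℝ {x : Fin (n + 1) → ℝ | 0 ≤ x 0} f := by
  have hcvx : Convex ℝ {x : Fin (n + 1) → ℝ | 0 ≤ x 0} := by
    intro x hx y hy a b ha hb hab
    simp only [mem_setOf_eq] at *
    have : (a • x + b • y) 0 = a * x 0 + b * y 0 := by simp
    rw [this]
    exact add_nonneg (mul_nonneg ha hx) (mul_nonneg hb hy)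
  refine ⟨hcvx, ?_⟩
  intro x hx y hy a b ha hb hab
  set e : Fin (n + 1) → ℝ := Pi.single 0 1 with he
  have he0 : e 0 = 1 := by simp [he]
  have hmem : ∀ z : Fin (n + 1) → ℝ, 0 ≤ z 0 → ∀ ε : ℝ, 0 < ε →
      z + ε • e ∈ {x : Fin (n + 1) → ℝ | 0 < x 0} := by
    intro z hz ε hε
    simp only [mem_setOf_eq, Pi.add_apply, Pi.smul_apply, he0, smul_eq_mul, mul_one]
    linarith
  have key : ∀ ε ∈ Ioi (0:ℝ),
      f ((a • x + b • y) + ε • e) ≤ a * f (x + ε • e) + b * f (y + ε • e) := by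
    intro ε hε
    have h2 := h.2 (hmem x hx ε hε) (hmem y hy ε hε) ha hb hab
    have hre : a • (x + ε • e) + b • (y + ε • e) = (a • x + b • y) + ((a + b) * ε) • e := by
      module
    rw [hre, hab, one_mul] at h2
    exact h2
  have t0 : Tendsto (fun ε : ℝ => (a • x + b • y) + ε • e) (nhdsWithin 0 (Ioi 0))
      (nhds ((a • x + b • y) + (0:ℝ) • e)) := by
    apply Tendsto.mono_left _ nhdsWithin_le_nhds
    exact (tendsto_id.smul_const e).const_add _
  have t1 : Tendsto (fun ε : ℝ => f ((a • x + b • y) + ε • e)) (nhdsWithin 0 (Ioi 0))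
      (nhds (f (a • x + b • y))) := by
    have := (hf.tendsto _).comp t0
    simpa [Function.comp_def] using this
  have t2 : Tendsto (fun ε : ℝ => a * f (x + ε • e) + b * f (y + ε • e))
      (nhdsWithin 0 (Ioi 0)) (nhds (a * f x + b * f y)) := by
    have tx : Tendsto (fun ε : ℝ => x + ε • e) (nhdsWithin 0 (Ioi 0)) (nhds (x + (0:ℝ) • e)) := by
      apply Tendsto.mono_left _ nhdsWithin_le_nhds
      exact (tendsto_id.smul_const e).const_add _
    have ty : Tendsto (fun ε : ℝ => y + ε • e) (nhdsWithin 0 (Ioi 0)) (nhds (y + (0:ℝ) • e)) := by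
      apply Tendsto.mono_left _ nhdsWithin_le_nhds
      exact (tendsto_id.smul_const e).const_add _
    have fx := (hf.tendsto _).comp tx
    have fy := (hf.tendsto _).comp ty
    simp only [zero_smul, add_zero] at fx fy
    exact ((fx.const_mul a).add (fy.const_mul b))
  exact le_of_tendsto_of_tendsto t1 t2 (Filter.eventually_of_mem self_mem_nhdsWithin key)


lemma cons_comb {m : ℕ} (a b : ℝ) (y z : Fin m → ℝ) (hab : a + b = 1) :
    (Fin.cons 1 (a • y + b • z) : Fin (m+1) → ℝ)
      = a • (Fin.cons 1 y : Fin (m+1) → ℝ) + b • (Fin.cons 1 z : Fin (m+1) → ℝ) := by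
  funext i
  refine Fin.cases ?_ ?_ i
  · simp only [Fin.cons_zero, Pi.add_apply, Pi.smul_apply, smul_eq_mul, mul_one]
    linarith
  · intro j
    simp

lemma cons_decomp {m : ℕ} (x : Fin (m+1) → ℝ) (hx : x 0 ≠ 0) :
    x = x 0 • (Fin.cons 1 (fun i : Fin m => x i.succ / x 0) : Fin (m+1) → ℝ) := by
  funext i
  refine Fin.cases ?_ ?_ i
  · simp
  · intro j
    simp only [Pi.smul_apply, Fin.cons_succ, smul_eq_mul]
    field_simp

lemma tail_comb {m : ℕ} (a b t : ℝ) (x z : Fin (m+1) → ℝ) (hx : x 0 ≠ 0) (hz : z 0 ≠ 0)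
    (ht : t ≠ 0) :
    (fun i : Fin m => (a • x + b • z) i.succ / t)
      = (a * x 0 / t) • (fun i : Fin m => x i.succ / x 0)
        + (b * z 0 / t) • (fun i : Fin m => z i.succ / z 0) := by
  funext i
  simp only [Pi.add_apply, Pi.smul_apply, smul_eq_mul]
  field_simp


set_option maxHeartbeats 1000000 in
/-- A psd form `p` of degree `2r` with `p(1,0,…,0) > 0` is convex iff the `2r`-th root of
its dehomogenization `q(x₂,…,xₙ) = p(1,x₂,…,xₙ)` is convex. -/
theorem convex_iff_dehomog_root_convex (m r : ℕ) (hr : 0 < r)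
    (p : MvPolynomial (Fin (m + 1)) ℝ) (hp : p.IsHomogeneous (2 * r))
    (hpsd : ∀ u : Fin (m + 1) → ℝ, 0 ≤ eval u p)
    (h1 : 0 < eval (Fin.cons 1 (0 : Fin m → ℝ)) p) :
    ConvexOn ℝ Set.univ (fun x : Fin (m + 1) → ℝ => eval x p) ↔
      ConvexOn ℝ Set.univ
        (fun y : Fin m → ℝ => (eval (Fin.cons 1 y) p) ^ ((1 : ℝ) / (2 * r))) := by
  have hrR : (0:ℝ) < (r:ℝ) := by exact_mod_cast hr
  set d : ℕ := 2 * r with hd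
  set ρ : ℝ := 2 * (r:ℝ) with hρ
  have hρcast : ((d:ℕ):ℝ) = ρ := by rw [hd, hρ]; push_cast; ring
  have hρpos : 0 < ρ := by rw [hρ]; linarith
  have hdeven : Even d := by rw [hd]; exact even_two_mul r
  set P : (Fin (m+1) → ℝ) → ℝ := fun x => eval x p with hP
  have hPdiff : Differentiable ℝ P := mv_differentiable p
  have hPc : Continuous P := hPdiff.continuous
  have hP0 : ∀ x, 0 ≤ P x := hpsd
  have hPh : ∀ (c : ℝ) (x : Fin (m+1) → ℝ), P (c • x) = c ^ d * P x :=
    fun c x => eval_smul_homog hp c x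
  set f : (Fin (m+1) → ℝ) → ℝ := fun x => P x ^ ((1:ℝ)/ρ) with hfdef
  have hf0 : ∀ x, 0 ≤ f x := fun x => Real.rpow_nonneg (hP0 x) _
  have hfP : ∀ x, (f x) ^ ρ = P x := by
    intro x
    show (P x ^ ((1:ℝ)/ρ)) ^ ρ = P x
    rw [← Real.rpow_mul (hP0 x), one_div_mul_cancel hρpos.ne', Real.rpow_one]
  have hPf : ∀ x, P x = (f x) ^ d := by
    intro x
    rw [← Real.rpow_natCast (f x) d, hρcast, hfP]
  have hpowrt : ∀ c : ℝ, 0 ≤ c → ((c ^ d : ℝ)) ^ ((1:ℝ)/ρ) = c := by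
    intro c hc
    rw [← Real.rpow_natCast c d, ← Real.rpow_mul hc, hρcast, mul_one_div,
      div_self hρpos.ne', Real.rpow_one]
  have hfh : ∀ (c : ℝ), 0 ≤ c → ∀ x, f (c • x) = c * f x := by
    intro c hc x
    show P (c • x) ^ ((1:ℝ)/ρ) = c * P x ^ ((1:ℝ)/ρ)
    rw [hPh, Real.mul_rpow (pow_nonneg hc d) (hP0 x), hpowrt c hc]
  constructor
  · -- forward
    intro hcv
    have hfconv : ConvexOn ℝ univ f := by
      refine ⟨convex_univ, ?_⟩
      intro u _ v _ a b ha hb hab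
      simp only [smul_eq_mul]
      have key : ∀ ε : ℝ, 0 < ε → f (a • u + b • v) ≤ (a * f u + b * f v) + ε := by
        intro ε hε
        set α : ℝ := f u + ε with hα
        set β : ℝ := f v + ε with hβ
        have hαpos : 0 < α := by have := hf0 u; rw [hα]; linarith
        have hβpos : 0 < β := by have := hf0 v; rw [hβ]; linarith
        set s : ℝ := a * α + b * β with hs
        have hspos : 0 < s := by
          have h1' : a * α ≥ a * ε := by nlinarith [hf0 u]
          have h2' : b * β ≥ b * ε := by nlinarith [hf0 v]
          have : s ≥ (a + b) * ε := by rw [hs]; nlinarith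
          rw [hab, one_mul] at this; linarith
        have hPu : P ((1/α) • u) ≤ 1 := by
          rw [hPh]
          have h1' : f u ≤ α := by rw [hα]; linarith
          have h2' : P u ≤ α ^ d := by
            rw [hPf u]; exact pow_le_pow_left₀ (hf0 u) h1' d
          calc (1/α) ^ d * P u ≤ (1/α) ^ d * α ^ d := by
                apply mul_le_mul_of_nonneg_left h2' (by positivity)
            _ = ((1/α) * α) ^ d := by rw [mul_pow]
            _ = 1 := by rw [one_div_mul_cancel hαpos.ne', one_pow]
        have hPv : P ((1/β) • v) ≤ 1 := by
          rw [hPh]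
          have h1' : f v ≤ β := by rw [hβ]; linarith
          have h2' : P v ≤ β ^ d := by
            rw [hPf v]; exact pow_le_pow_left₀ (hf0 v) h1' d
          calc (1/β) ^ d * P v ≤ (1/β) ^ d * β ^ d := by
                apply mul_le_mul_of_nonneg_left h2' (by positivity)
            _ = ((1/β) * β) ^ d := by rw [mul_pow]
            _ = 1 := by rw [one_div_mul_cancel hβpos.ne', one_pow]
        have hw1 : (0:ℝ) ≤ a * α / s := by positivity
        have hw2 : (0:ℝ) ≤ b * β / s := by positivity
        have hwsum : a * α / s + b * β / s = 1 := by
          field_simp; linarith [hs]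
        have hcomb : a • u + b • v
            = s • ((a * α / s) • ((1/α) • u) + (b * β / s) • ((1/β) • v)) := by
          have c1 : s * (a * α / s) * (1/α) = a := by field_simp
          have c2 : s * (b * β / s) * (1/β) = b := by field_simp
          rw [smul_add, smul_smul, smul_smul, smul_smul, smul_smul, c1, c2]
        have hPcomb : P (a • u + b • v) ≤ s ^ d := by
          rw [hcomb, hPh]
          have := hcv.2 (mem_univ ((1/α) • u)) (mem_univ ((1/β) • v)) hw1 hw2 hwsum
          simp only [smul_eq_mul] at this
          calc s ^ d * P ((a * α / s) • ((1/α) • u) + (b * β / s) • ((1/β) • v))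
              ≤ s ^ d * (a * α / s * P ((1/α) • u) + b * β / s * P ((1/β) • v)) := by
                apply mul_le_mul_of_nonneg_left this (by positivity)
            _ ≤ s ^ d * (a * α / s * 1 + b * β / s * 1) := by
                apply mul_le_mul_of_nonneg_left _ (by positivity)
                have g1 := mul_le_mul_of_nonneg_left hPu hw1
                have g2 := mul_le_mul_of_nonneg_left hPv hw2
                linarith
            _ = s ^ d := by rw [mul_one, mul_one, hwsum, mul_one]
        have hfle : f (a • u + b • v) ≤ s := by
          show P (a • u + b • v) ^ ((1:ℝ)/ρ) ≤ s
          calc P (a • u + b • v) ^ ((1:ℝ)/ρ) ≤ (s ^ d) ^ ((1:ℝ)/ρ) :=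
                Real.rpow_le_rpow (hP0 _) hPcomb (by positivity)
            _ = s := hpowrt s hspos.le
        have hs' : s = (a * f u + b * f v) + ε := by
          rw [hs, hα, hβ]
          have : a * (f u + ε) + b * (f v + ε) = a * f u + b * f v + (a + b) * ε := by ring
          rw [this, hab, one_mul]
        rw [← hs']
        exact hfle
      exact le_of_forall_pos_le_add key
    -- restrict to slice
    refine ⟨convex_univ, ?_⟩
    intro y _ z _ a b ha hb hab
    have hc := cons_comb a b y z hab
    have hmain := hfconv.2 (mem_univ ((Fin.cons 1 y : Fin (m+1) → ℝ)))
      (mem_univ ((Fin.cons 1 z : Fin (m+1) → ℝ))) ha hb hab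
    simp only [smul_eq_mul] at hmain ⊢
    simp only [hfdef, hP] at hmain
    rw [hc]
    exact hmain
  · -- backward
    intro hq
    have hopen : Convex ℝ {x : Fin (m+1) → ℝ | 0 < x 0} := by
      intro x hx z hz a b ha hb hab
      simp only [mem_setOf_eq] at hx hz ⊢
      have hco : (a • x + b • z) 0 = a * x 0 + b * z 0 := by simp
      rw [hco]
      rcases eq_or_lt_of_le ha with h | h
      · have hb1 : b = 1 := by linarith
        rw [← h, hb1]; simpa using hz
      · nlinarith
    have hform : ∀ x : Fin (m+1) → ℝ, 0 < x 0 →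
        f x = x 0 * f (Fin.cons 1 (fun i : Fin m => x i.succ / x 0)) := by
      intro x hx
      have hxeq := cons_decomp x hx.ne'
      calc f x = f (x 0 • (Fin.cons 1 (fun i : Fin m => x i.succ / x 0) : Fin (m+1) → ℝ)) := by
            rw [← hxeq]
        _ = x 0 * f (Fin.cons 1 (fun i : Fin m => x i.succ / x 0)) := hfh _ hx.le _
    have hqf : ∀ (y z : Fin m → ℝ) (a b : ℝ), 0 ≤ a → 0 ≤ b → a + b = 1 →
        f (Fin.cons 1 (a • y + b • z)) ≤ a * f (Fin.cons 1 y) + b * f (Fin.cons 1 z) := by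
      intro y z a b ha hb hab
      have h' := hq.2 (mem_univ y) (mem_univ z) ha hb hab
      simp only [smul_eq_mul] at h'
      simp only [hfdef, hP]
      exact h'
    have hfopen : ConvexOn ℝ {x : Fin (m+1) → ℝ | 0 < x 0} f := by
      refine ⟨hopen, ?_⟩
      intro x hx z hz a b ha hb hab
      have hx0 : 0 < x 0 := hx
      have hz0 : 0 < z 0 := hz
      set t : ℝ := a * x 0 + b * z 0 with hts
      have ht : 0 < t := by
        rcases eq_or_lt_of_le ha with h | h
        · have hb1 : b = 1 := by linarith
          rw [hts, ← h, hb1]; simpa using hz0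
        · rw [hts]; nlinarith
      have hco : (a • x + b • z) 0 = t := by simp [hts]
      have hmem : (0:ℝ) < (a • x + b • z) 0 := by rw [hco]; exact ht
      have hw := tail_comb a b t x z hx0.ne' hz0.ne' ht.ne'
      have hw1 : (0:ℝ) ≤ a * x 0 / t := by positivity
      have hw2 : (0:ℝ) ≤ b * z 0 / t := by positivity
      have hwsum : a * x 0 / t + b * z 0 / t = 1 := by
        field_simp [hts]; linarith [hts]
      have hqs' := hqf (fun i : Fin m => x i.succ / x 0) (fun i : Fin m => z i.succ / z 0)
        (a * x 0 / t) (b * z 0 / t) hw1 hw2 hwsum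
      simp only [smul_eq_mul]
      rw [hform _ hmem, hform _ hx0, hform _ hz0, hco, hw]
      calc t * f (Fin.cons 1 ((a * x 0 / t) • (fun i : Fin m => x i.succ / x 0)
            + (b * z 0 / t) • (fun i : Fin m => z i.succ / z 0)))
          ≤ t * ((a * x 0 / t) * f (Fin.cons 1 (fun i : Fin m => x i.succ / x 0))
            + (b * z 0 / t) * f (Fin.cons 1 (fun i : Fin m => z i.succ / z 0))) :=
            mul_le_mul_of_nonneg_left hqs' ht.le
        _ = a * (x 0 * f (Fin.cons 1 (fun i : Fin m => x i.succ / x 0)))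
            + b * (z 0 * f (Fin.cons 1 (fun i : Fin m => z i.succ / z 0))) := by
            field_simp
    have hPopen : ConvexOn ℝ {x : Fin (m+1) → ℝ | 0 < x 0} P := by
      refine ⟨hopen, ?_⟩
      intro x hx z hz a b ha hb hab
      have h1' := hfopen.2 hx hz ha hb hab
      simp only [smul_eq_mul] at h1' ⊢
      have hpow := (Even.convexOn_pow hdeven).2 (mem_univ (f x)) (mem_univ (f z)) ha hb hab
      simp only [smul_eq_mul] at hpow
      calc P (a • x + b • z) = f (a • x + b • z) ^ d := hPf _
        _ ≤ (a * f x + b * f z) ^ d := pow_le_pow_left₀ (hf0 _) h1' d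
        _ ≤ a * (f x) ^ d + b * (f z) ^ d := hpow
        _ = a * P x + b * P z := by rw [← hPf, ← hPf]
    have hPclosed : ConvexOn ℝ {x : Fin (m+1) → ℝ | 0 ≤ x 0} P :=
      convexOn_closed_half hPc hPopen
    have hPeven : ∀ x, P (-x) = P x := by
      intro x
      have : -x = (-1 : ℝ) • x := by simp
      rw [this, hPh]
      have : (-1 : ℝ) ^ d = 1 := hdeven.neg_one_pow
      rw [this, one_mul]
    have hPneg : ConvexOn ℝ {x : Fin (m+1) → ℝ | x 0 ≤ 0} P := by
      have hcvx2 : Convex ℝ {x : Fin (m+1) → ℝ | x 0 ≤ 0} := by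
        intro x hx z hz a b ha hb hab
        simp only [mem_setOf_eq] at hx hz ⊢
        have : (a • x + b • z) 0 = a * x 0 + b * z 0 := by simp
        rw [this]
        have := mul_nonneg ha (neg_nonneg.mpr hx)
        have := mul_nonneg hb (neg_nonneg.mpr hz)
        nlinarith
      refine ⟨hcvx2, ?_⟩
      intro x hx z hz a b ha hb hab
      have hx' : -x ∈ {x : Fin (m+1) → ℝ | 0 ≤ x 0} := by
        simp only [mem_setOf_eq, Pi.neg_apply]
        exact neg_nonneg.mpr hx
      have hz' : -z ∈ {x : Fin (m+1) → ℝ | 0 ≤ x 0} := by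
        simp only [mem_setOf_eq, Pi.neg_apply]
        exact neg_nonneg.mpr hz
      have := hPclosed.2 hx' hz' ha hb hab
      have hne : a • (-x) + b • (-z) = -(a • x + b • z) := by module
      rw [hne, hPeven, hPeven, hPeven] at this
      exact this
    exact glue_halves hPdiff hPclosed hPneg

end AuxProofLemmas
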